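/- Let (Γ, μ) be a probability space, β ∈ (0,1), ε > 0, and let f, f_r, e : Γ → ℝ be measurable functions with e ≥ 0 and |f(ξ) − f_r(ξ)| ≤ e(ξ) for every ξ ∈ Γ. Set t̂ := VaR_β[f] and t̂^{r,e} := VaR_β[f_r − e]. Then the risk-region inclusion holds: {ξ ∈ Γ : f(ξ) ≥ t̂ − ε/2} ⊆ {ξ ∈ Γ : f_r(ξ) + e(ξ) ≥ t̂^{r,e} − ε/2}. -/

import Mathlib

open MeasureTheory

/-- Value-at-Risk of level `β` of a random variable `X` under `μ`. -/
noncomputable def VaR {Γ : Type*} [MeasurableSpace Γ] (μ : Measure Γ) (β : ℝ) (X : Γ → ℝ) : ℝ :=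
  sInf {t : ℝ | β ≤ (μ {ξ | X ξ ≤ t}).toReal}

lemma var_set_eq_cdf {Γ : Type*} [MeasurableSpace Γ] (μ : Measure Γ) (X : Γ → ℝ)
    [IsProbabilityMeasure μ] (hX : Measurable X) (t : ℝ) :
    (μ {ξ | X ξ ≤ t}).toReal = ProbabilityTheory.cdf (μ.map X) t := by
  haveI := Measure.isProbabilityMeasure_map (μ := μ) hX.aemeasurable
  rw [ProbabilityTheory.cdf_eq_real, measureReal_def, Measure.map_apply hX measurableSet_Iic]
  rfl

lemma var_set_nonempty {Γ : Type*} [MeasurableSpace Γ] (μ : Measure Γ)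
    [IsProbabilityMeasure μ] {β : ℝ} (hβ : β < 1) (X : Γ → ℝ) (hX : Measurable X) :
    {t : ℝ | β ≤ (μ {ξ | X ξ ≤ t}).toReal}.Nonempty := by
  have := Measure.isProbabilityMeasure_map (μ := μ) hX.aemeasurable
  have h := (ProbabilityTheory.tendsto_cdf_atTop (μ.map X)).eventually (eventually_gt_nhds hβ)
  obtain ⟨t, ht⟩ := h.exists
  replace ht := ht.le
  exact ⟨t, by rw [Set.mem_setOf_eq, var_set_eq_cdf μ X hX]; exact ht⟩

lemma var_set_bddBelow {Γ : Type*} [MeasurableSpace Γ] (μ : Measure Γ)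
    [IsProbabilityMeasure μ] {β : ℝ} (hβ : 0 < β) (X : Γ → ℝ) (hX : Measurable X) :
    BddBelow {t : ℝ | β ≤ (μ {ξ | X ξ ≤ t}).toReal} := by
  have := Measure.isProbabilityMeasure_map (μ := μ) hX.aemeasurable
  have h := (ProbabilityTheory.tendsto_cdf_atBot (μ.map X)).eventually_lt_const hβ
  obtain ⟨t0, ht0⟩ := h.exists
  refine ⟨t0, fun s hs => ?_⟩
  by_contra hlt
  push_neg at hlt
  rw [Set.mem_setOf_eq, var_set_eq_cdf μ X hX] at hs
  exact absurd (hs.trans ((ProbabilityTheory.cdf (μ.map X)).mono hlt.le)) (not_le.mpr ht0)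

lemma VaR_mono {Γ : Type*} [MeasurableSpace Γ] (μ : Measure Γ)
    [IsProbabilityMeasure μ] {β : ℝ} (hβ : β ∈ Set.Ioo (0 : ℝ) 1)
    {X Y : Γ → ℝ} (hX : Measurable X) (hY : Measurable Y) (hXY : ∀ ξ, X ξ ≤ Y ξ) :
    VaR μ β X ≤ VaR μ β Y := by
  apply csInf_le_csInf (var_set_bddBelow μ hβ.1 X hX) (var_set_nonempty μ hβ.2 Y hY)
  intro t ht
  refine le_trans ht (ENNReal.toReal_mono (measure_ne_top μ _) (measure_mono ?_))
  exact fun ξ hξ => (hXY ξ).trans hξ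

theorem risk_region_inclusion {Γ : Type*} [MeasurableSpace Γ] (μ : Measure Γ)
    [IsProbabilityMeasure μ] (β ε : ℝ) (hβ : β ∈ Set.Ioo (0 : ℝ) 1) (hε : 0 < ε)
    (f fr e : Γ → ℝ) (hf : Measurable f) (hfr : Measurable fr) (he : Measurable e)
    (he0 : ∀ ξ, 0 ≤ e ξ) (herr : ∀ ξ, |f ξ - fr ξ| ≤ e ξ) :
    {ξ | VaR μ β f - ε / 2 ≤ f ξ} ⊆
      {ξ | VaR μ β (fun ξ => fr ξ - e ξ) - ε / 2 ≤ fr ξ + e ξ} := by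
  intro ξ hξ
  have h1 : VaR μ β (fun ξ => fr ξ - e ξ) ≤ VaR μ β f := by
    refine VaR_mono μ hβ (hfr.sub he) hf fun ξ => ?_
    have := (abs_le.mp (herr ξ)).1
    linarith
  have h2 : f ξ ≤ fr ξ + e ξ := by
    have := (abs_le.mp (herr ξ)).2
    linarith
  simp only [Set.mem_setOf_eq] at hξ ⊢
  linarith
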